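/- Let m, k, t be positive integers with k·t ≤ m and 2k ≤ m. Let ν be the distribution of a tuple (R₁,…,R_t) of mutually independent random k-element subsets of {1,…,m}, each uniformly distributed on all k-element subsets, and let σ be the uniform distribution on the set of t-tuples (S₁,…,S_t) of pairwise disjoint k-element subsets of {1,…,m}. Then the statistical distance between ν and σ satisfies δ(ν,σ) ≤ k²·t²/(m − k). -/

import Mathlib

open Finset

/-- The set of `k`-element subsets of `{1,…,m}`. -/
abbrev KSubset (m k : ℕ) := {s : Finset (Fin m) // s.card = k}

/-- The product of `t` independent uniform distributions on `k`-element subsets of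
`{1,…,m}`: every `t`-tuple gets probability `1 / |KSubset m k|^t`. -/
noncomputable def productUniform (m k t : ℕ) : (Fin t → KSubset m k) → ℝ :=
  fun _ => 1 / (Fintype.card (KSubset m k) : ℝ) ^ t

/-- The uniform distribution on `t`-tuples of pairwise disjoint `k`-element subsets
of `{1,…,m}`. -/
noncomputable def uniformDisjoint (m k t : ℕ) : (Fin t → KSubset m k) → ℝ :=
  fun S =>
    if ∀ i j, i ≠ j → Disjoint (S i).1 (S j).1 then
      1 / ((Finset.univ.filter
        (fun S' : Fin t → KSubset m k => ∀ i j, i ≠ j → Disjoint (S' i).1 (S' j).1)).card : ℝ)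
    else 0

/-- Let `m, k, t` be positive integers with `k·t ≤ m` and `2k ≤ m`.
Let `ν` be the distribution of a tuple `(R₁,…,R_t)` of mutually independent uniformly
random `k`-element subsets of `{1,…,m}`, and let `σ` be the uniform distribution on
`t`-tuples of pairwise disjoint `k`-element subsets. Then the statistical distance
satisfies `δ(ν,σ) ≤ k²·t²/(m − k)`, i.e. `|ν(B) − σ(B)| ≤ k²·t²/(m − k)` for every
event `B`. -/
lemma count_mem (m k : ℕ) (hk : 1 ≤ k) (x : Fin m) :
    (univ.filter fun s : KSubset m k => x ∈ s.1).card = (m-1).choose (k-1) := by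
  have hc : ((univ : Finset (Fin m)).erase x).card = m - 1 := by
    rw [card_erase_of_mem (mem_univ x), card_univ, Fintype.card_fin]
  rw [← hc, ← Finset.card_powersetCard (k-1) ((univ : Finset (Fin m)).erase x)]
  apply Finset.card_bij (fun s _ => s.1.erase x)
  · intro s hs
    simp only [mem_filter, mem_univ, true_and] at hs
    rw [mem_powersetCard]
    exact ⟨fun y hy => mem_erase.2 ⟨(mem_erase.1 hy).1, mem_univ y⟩,
      by rw [card_erase_of_mem hs, s.2]⟩
  · intro s hs s' hs' h
    simp only [mem_filter, mem_univ, true_and] at hs hs'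
    apply Subtype.ext
    rw [← insert_erase hs, ← insert_erase hs', h]
  · intro u hu
    rw [mem_powersetCard] at hu
    have hx : x ∉ u := fun h => (mem_erase.1 (hu.1 h)).1 rfl
    refine ⟨⟨insert x u, ?_⟩, ?_, ?_⟩
    · rw [card_insert_of_notMem hx, hu.2]; omega
    · simp [mem_filter]
    · simp [erase_insert hx]

lemma card_ksubset (m k : ℕ) : Fintype.card (KSubset m k) = m.choose k := by
  rw [Fintype.card_finset_len, Fintype.card_fin]

lemma pair_bound (m k t : ℕ) (hk : 1 ≤ k) (i j : Fin t) (hij : i ≠ j) :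
    ((univ.filter fun S : Fin t → KSubset m k => ¬ Disjoint (S i).1 (S j).1).card : ℝ)
      ≤ m * ((m-1).choose (k-1))^2 * (Fintype.card (KSubset m k) : ℝ)^(t-2) := by
  classical
  set C : ℝ := ((m-1).choose (k-1) : ℝ)
  set N : ℝ := (Fintype.card (KSubset m k) : ℝ)
  -- indicator bound
  have step1 : ((univ.filter fun S : Fin t → KSubset m k => ¬ Disjoint (S i).1 (S j).1).card : ℝ)
      ≤ ∑ S : Fin t → KSubset m k, ∑ x : Fin m,
          (if x ∈ (S i).1 then (1:ℝ) else 0) * (if x ∈ (S j).1 then (1:ℝ) else 0) := by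
    rw [card_eq_sum_ones, Nat.cast_sum]
    rw [← Finset.sum_filter_add_sum_filter_not univ
      (fun S : Fin t → KSubset m k => ¬ Disjoint (S i).1 (S j).1)]
    have h2 : (0:ℝ) ≤ ∑ S ∈ univ.filter (fun S : Fin t → KSubset m k =>
        ¬¬ Disjoint (S i).1 (S j).1), ∑ x : Fin m,
          (if x ∈ (S i).1 then (1:ℝ) else 0) * (if x ∈ (S j).1 then (1:ℝ) else 0) := by
      positivity
    refine le_add_of_le_of_nonneg (Finset.sum_le_sum ?_) h2
    intro S hS
    simp only [mem_filter, mem_univ, true_and, Finset.not_disjoint_iff] at hS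
    obtain ⟨x, hx1, hx2⟩ := hS
    push_cast
    calc (1:ℝ) = (if x ∈ (S i).1 then (1:ℝ) else 0) * (if x ∈ (S j).1 then (1:ℝ) else 0) := by
          simp [hx1, hx2]
      _ ≤ _ := Finset.single_le_sum (f := fun x => (if x ∈ (S i).1 then (1:ℝ) else 0) *
          (if x ∈ (S j).1 then (1:ℝ) else 0)) (fun x _ => by positivity) (mem_univ x)
  rw [Finset.sum_comm] at step1
  refine step1.trans ?_
  have inner : ∀ x : Fin m, (∑ S : Fin t → KSubset m k,
      (if x ∈ (S i).1 then (1:ℝ) else 0) * (if x ∈ (S j).1 then (1:ℝ) else 0))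
      = C^2 * N^(t-2) := by
    intro x
    have ht2 : 2 ≤ t := by
      have h1 := i.isLt; have h2 := j.isLt
      have : i.val ≠ j.val := fun h => hij (Fin.ext h)
      omega
    set f : Fin t → KSubset m k → ℝ :=
      fun l b => if l = i ∨ l = j then (if x ∈ b.1 then (1:ℝ) else 0) else 1 with hf
    have hprod : ∀ S : Fin t → KSubset m k,
        (if x ∈ (S i).1 then (1:ℝ) else 0) * (if x ∈ (S j).1 then (1:ℝ) else 0)
        = ∏ l, f l (S l) := by
      intro S
      rw [← Finset.mul_prod_erase univ (fun l => f l (S l)) (mem_univ i),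
        ← Finset.mul_prod_erase ((univ : Finset (Fin t)).erase i) (fun l => f l (S l))
          (mem_erase.2 ⟨(Ne.symm hij), mem_univ j⟩)]
      have h1 : f i (S i) = (if x ∈ (S i).1 then (1:ℝ) else 0) := by simp [hf]
      have h2 : f j (S j) = (if x ∈ (S j).1 then (1:ℝ) else 0) := by simp [hf]
      have h3 : ∏ l ∈ (((univ : Finset (Fin t)).erase i).erase j), f l (S l) = 1 := by
        apply Finset.prod_eq_one
        intro l hl
        simp only [mem_erase] at hl
        simp [hf, hl.1, hl.2.1]
      rw [h1, h2, h3]; ring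
    simp_rw [hprod]
    rw [← Fintype.prod_sum f]
    have hsum : ∀ l : Fin t, (∑ b : KSubset m k, f l b)
        = if l = i ∨ l = j then C else N := by
      intro l
      by_cases hl : l = i ∨ l = j
      · simp only [hf, hl, if_true]
        rw [Finset.sum_boole]
        simp only [C, count_mem m k hk x]
      · simp [hf, hl, N, Finset.card_univ]
    simp_rw [hsum]
    rw [← Finset.mul_prod_erase univ _ (mem_univ i),
      ← Finset.mul_prod_erase ((univ : Finset (Fin t)).erase i) _
        (mem_erase.2 ⟨(Ne.symm hij), mem_univ j⟩)]
    have h3 : ∏ l ∈ (((univ : Finset (Fin t)).erase i).erase j),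
        (if l = i ∨ l = j then C else N) = N ^ (t-2) := by
      rw [Finset.prod_congr rfl (fun l hl => ?_), Finset.prod_const]
      · congr 1
        rw [card_erase_of_mem (mem_erase.2 ⟨(Ne.symm hij), mem_univ j⟩),
          card_erase_of_mem (mem_univ i), card_univ, Fintype.card_fin]
        omega
      · simp only [mem_erase] at hl
        simp [hl.1, hl.2.1]
    rw [h3]
    simp only [eq_self_iff_true, true_or, or_true, if_true]
    ring
  rw [Finset.sum_congr rfl (fun x _ => inner x), Finset.sum_const, card_univ,
    Fintype.card_fin, nsmul_eq_mul]
  ring_nf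
  exact le_refl _

lemma choose_identity (m k : ℕ) (hk : 1 ≤ k) (hm : 1 ≤ m) :
    m * (m-1).choose (k-1) = m.choose k * k := by
  have := Nat.add_one_mul_choose_eq (m-1) (k-1)
  have h1 : m - 1 + 1 = m := by omega
  have h2 : k - 1 + 1 = k := by omega
  rwa [h1, h2] at this

lemma badcount (m k t : ℕ) (hk : 1 ≤ k) (hm : 1 ≤ m)
    (P : (Fin t → KSubset m k) → Prop)
    (hPdef : ∀ S, P S ↔ ∀ i j, i ≠ j → Disjoint (S i).1 (S j).1)
    [DecidablePred P] :
    ((univ.filter fun S => ¬ P S).card : ℝ)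
      ≤ t^2 * k^2 * (Fintype.card (KSubset m k) : ℝ)^t / m := by
  classical
  set N : ℝ := (Fintype.card (KSubset m k) : ℝ)
  have hN0 : (0:ℝ) ≤ N := Nat.cast_nonneg _
  have hm0 : (0:ℝ) < m := by exact_mod_cast hm
  have hsub : (univ.filter fun S => ¬ P S) ⊆
      (univ : Finset (Fin t)).offDiag.biUnion (fun p =>
        univ.filter fun S : Fin t → KSubset m k => ¬ Disjoint (S p.1).1 (S p.2).1) := by
    intro S hS
    simp only [mem_filter, mem_univ, true_and, hPdef] at hS
    push_neg at hS
    obtain ⟨i, j, hij, hd⟩ := hS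
    exact mem_biUnion.2 ⟨(i, j), Finset.mem_offDiag.2 ⟨mem_univ i, mem_univ j, hij⟩,
      mem_filter.2 ⟨mem_univ S, hd⟩⟩
  have h1 : ((univ.filter fun S => ¬ P S).card : ℝ)
      ≤ ∑ p ∈ (univ : Finset (Fin t)).offDiag,
          ((univ.filter fun S : Fin t → KSubset m k =>
            ¬ Disjoint (S p.1).1 (S p.2).1).card : ℝ) := by
    calc ((univ.filter fun S => ¬ P S).card : ℝ)
        ≤ (((univ : Finset (Fin t)).offDiag.biUnion (fun p =>
          univ.filter fun S : Fin t → KSubset m k =>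
            ¬ Disjoint (S p.1).1 (S p.2).1)).card : ℝ) := by
          exact_mod_cast Finset.card_le_card hsub
      _ ≤ _ := by exact_mod_cast Finset.card_biUnion_le
  refine h1.trans ?_
  have hterm : ∀ p ∈ (univ : Finset (Fin t)).offDiag,
      ((univ.filter fun S : Fin t → KSubset m k =>
        ¬ Disjoint (S p.1).1 (S p.2).1).card : ℝ) ≤ k^2 * N^t / m := by
    intro p hp
    have hij : p.1 ≠ p.2 := (Finset.mem_offDiag.1 hp).2.2
    refine (pair_bound m k t hk p.1 p.2 hij).trans ?_
    have ht2 : 2 ≤ t := by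
      have h1 := p.1.isLt; have h2 := p.2.isLt
      have : p.1.val ≠ p.2.val := fun h => hij (Fin.ext h)
      omega
    set C : ℝ := ((m-1).choose (k-1) : ℝ) with hC
    have hmc : N * (k:ℝ) = (m:ℝ) * C := by
      have h := choose_identity m k hk hm
      have hN : N = (m.choose k : ℝ) := by simp [N, card_ksubset]
      have h' : ((m : ℕ) : ℝ) * (((m-1).choose (k-1) : ℕ) : ℝ)
          = ((m.choose k : ℕ) : ℝ) * ((k : ℕ) : ℝ) := by exact_mod_cast h
      rw [hN, hC, ← h']
    have hpow : N^(t-2) * N^2 = N^t := by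
      rw [← pow_add]
      congr 1
      omega
    have heq : (m:ℝ) * C^2 * N^(t-2) = k^2 * N^t / m := by
      rw [eq_div_iff hm0.ne']
      linear_combination (-(N^(t-2))*(N*(k:ℝ) + (m:ℝ)*C))*hmc + (k:ℝ)^2*hpow
    exact le_of_eq heq
  refine (Finset.sum_le_sum hterm).trans ?_
  rw [Finset.sum_const, nsmul_eq_mul]
  have hcard : ((univ : Finset (Fin t)).offDiag.card : ℝ) ≤ (t:ℝ)^2 := by
    rw [Finset.offDiag_card]
    have : ((univ : Finset (Fin t)).card) = t := by simp
    rw [this]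
    have h1 : t * t - t ≤ t * t := Nat.sub_le _ _
    calc ((t * t - t : ℕ) : ℝ) ≤ ((t*t : ℕ) : ℝ) := by exact_mod_cast h1
      _ = (t:ℝ)^2 := by push_cast; ring
  have hpos : (0:ℝ) ≤ k^2 * N^t / m := by positivity
  calc ((univ : Finset (Fin t)).offDiag.card : ℝ) * (k^2 * N^t / m)
      ≤ (t:ℝ)^2 * (k^2 * N^t / m) := by
        exact mul_le_mul_of_nonneg_right hcard hpos
    _ = t^2 * k^2 * N^t / m := by ring

lemma exists_disjoint_tuple (m k t : ℕ) (hkt : k * t ≤ m) :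
    ∃ S : Fin t → KSubset m k, ∀ i j : Fin t, i ≠ j → Disjoint (S i).1 (S j).1 := by
  have hbound : ∀ i : Fin t, ∀ y ∈ Finset.Ico (i.val * k) (i.val * k + k), y < m := by
    intro i y hy
    rw [Finset.mem_Ico] at hy
    have h1 : i.val + 1 ≤ t := i.isLt
    have : (i.val + 1) * k ≤ t * k := Nat.mul_le_mul_right k h1
    have : i.val * k + k ≤ m := by
      calc i.val * k + k = (i.val + 1) * k := by ring
        _ ≤ t * k := Nat.mul_le_mul_right k h1
        _ = k * t := Nat.mul_comm _ _
        _ ≤ m := hkt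
    omega
  refine ⟨fun i => ⟨Finset.attachFin (Finset.Ico (i.val * k) (i.val * k + k)) (hbound i), ?_⟩, ?_⟩
  · rw [Finset.card_attachFin, Nat.card_Ico]
    omega
  · intro i j hij
    rw [Finset.disjoint_left]
    intro a ha haj
    rw [Finset.mem_attachFin] at ha haj
    rw [Finset.mem_Ico] at ha haj
    have hne : i.val ≠ j.val := fun h => hij (Fin.ext h)
    rcases Nat.lt_or_ge i.val j.val with h | h
    · have h' := Nat.mul_le_mul_right k (Nat.succ_le_of_lt h)
      rw [Nat.succ_mul] at h'
      omega
    · have hlt : j.val < i.val := by omega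
      have h' := Nat.mul_le_mul_right k (Nat.succ_le_of_lt hlt)
      rw [Nat.succ_mul] at h'
      omega

set_option maxHeartbeats 1000000 in
theorem statistical_distance_bound (m k t : ℕ) (hk : 1 ≤ k) (ht : 1 ≤ t) (hm : 1 ≤ m)
    (hkt : k * t ≤ m) (h2k : 2 * k ≤ m) :
    ∀ B : Finset (Fin t → KSubset m k),
      |∑ S ∈ B, productUniform m k t S - ∑ S ∈ B, uniformDisjoint m k t S| ≤
        ((k : ℝ) ^ 2 * (t : ℝ) ^ 2) / ((m : ℝ) - (k : ℝ)) := by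
  intro B
  have hksm : k ≤ m := le_trans (by calc k = k * 1 := (Nat.mul_one k).symm
    _ ≤ k * t := Nat.mul_le_mul_left k ht) hkt
  have hNc : 0 < Fintype.card (KSubset m k) := by
    rw [card_ksubset]; exact Nat.choose_pos hksm
  set N : ℝ := (Fintype.card (KSubset m k) : ℝ) with hNdef
  have hN1 : (1:ℝ) ≤ N := by rw [hNdef]; exact_mod_cast hNc
  have hn : (0:ℝ) < N ^ t := by positivity
  set D := Finset.univ.filter
      (fun S' : Fin t → KSubset m k => ∀ i j, i ≠ j → Disjoint (S' i).1 (S' j).1) with hDdef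
  have hD0 : 0 < D.card := by
    apply Finset.card_pos.2
    obtain ⟨S, hS⟩ := exists_disjoint_tuple m k t hkt
    exact ⟨S, Finset.mem_filter.2 ⟨Finset.mem_univ S, hS⟩⟩
  have hd : (0:ℝ) < D.card := by exact_mod_cast hD0
  -- the two sums
  have hsum1 : ∑ S ∈ B, productUniform m k t S = B.card / N ^ t := by
    unfold productUniform
    rw [Finset.sum_const, nsmul_eq_mul, mul_one_div]
  have hsum2 : ∑ S ∈ B, uniformDisjoint m k t S
      = ((B.filter (fun S : Fin t → KSubset m k =>
          ∀ i j, i ≠ j → Disjoint (S i).1 (S j).1)).card : ℝ) / D.card := by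
    unfold uniformDisjoint
    rw [Finset.sum_ite, Finset.sum_const, Finset.sum_const_zero, add_zero,
      nsmul_eq_mul, mul_one_div]
  rw [hsum1, hsum2]
  set a : ℝ := (B.card : ℝ) with hadef
  set b : ℝ := ((B.filter (fun S : Fin t → KSubset m k =>
      ∀ i j, i ≠ j → Disjoint (S i).1 (S j).1)).card : ℝ) with hbdef
  set dc : ℝ := ((Finset.univ.filter (fun S : Fin t → KSubset m k =>
      ¬ ∀ i j, i ≠ j → Disjoint (S i).1 (S j).1)).card : ℝ) with hdcdef
  have hb0 : (0:ℝ) ≤ b := Nat.cast_nonneg _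
  have hdc0 : (0:ℝ) ≤ dc := Nat.cast_nonneg _
  have hbd : b ≤ (D.card : ℝ) := by
    rw [hbdef, hDdef]
    exact Nat.cast_le.2 (Finset.card_le_card
      (Finset.filter_subset_filter _ (Finset.subset_univ B)))
  have hba : b ≤ a := by
    rw [hbdef, hadef]
    exact Nat.cast_le.2 (Finset.card_filter_le B _)
  have hdn : (D.card : ℝ) + dc = N ^ t := by
    rw [hDdef, hdcdef]
    have h := Finset.card_filter_add_card_filter_not
      (s := (Finset.univ : Finset (Fin t → KSubset m k)))
      (p := fun S : Fin t → KSubset m k => ∀ i j, i ≠ j → Disjoint (S i).1 (S j).1)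
    have hcu : (Finset.univ : Finset (Fin t → KSubset m k)).card
        = (Fintype.card (KSubset m k)) ^ t := by
      rw [Finset.card_univ, Fintype.card_fun, Fintype.card_fin]
    rw [hcu] at h
    rw [hNdef]
    exact_mod_cast h
  have habdc : a ≤ b + dc := by
    have h := Finset.card_filter_add_card_filter_not
      (s := B)
      (p := fun S : Fin t → KSubset m k => ∀ i j, i ≠ j → Disjoint (S i).1 (S j).1)
    have h2 : (B.filter (fun S : Fin t → KSubset m k =>
        ¬ ∀ i j, i ≠ j → Disjoint (S i).1 (S j).1)).card
        ≤ (Finset.univ.filter (fun S : Fin t → KSubset m k =>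
        ¬ ∀ i j, i ≠ j → Disjoint (S i).1 (S j).1)).card :=
      Finset.card_le_card (Finset.filter_subset_filter _ (Finset.subset_univ B))
    rw [hadef, hbdef, hdcdef]
    calc (B.card : ℝ) = ((B.filter (fun S : Fin t → KSubset m k =>
          ∀ i j, i ≠ j → Disjoint (S i).1 (S j).1)).card
          + (B.filter (fun S : Fin t → KSubset m k =>
          ¬ ∀ i j, i ≠ j → Disjoint (S i).1 (S j).1)).card : ℕ) := by
          exact_mod_cast h.symm
      _ ≤ _ := by push_cast; exact add_le_add le_rfl (Nat.cast_le.2 h2)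
  -- key statistical distance bound
  have hkey : |a / N ^ t - b / D.card| ≤ dc / N ^ t := by
    have habs : |a * D.card - b * N ^ t| ≤ dc * D.card := by
      rw [abs_le]
      constructor
      · nlinarith [mul_le_mul_of_nonneg_right hba hd.le,
          mul_le_mul_of_nonneg_left hdn.le hb0]
      · nlinarith [mul_le_mul_of_nonneg_right habdc hd.le,
          mul_le_mul_of_nonneg_left (le_of_eq hdn.symm) hb0,
          mul_le_mul_of_nonneg_right hbd hdc0]
    calc |a / N ^ t - b / D.card|
        = |a * D.card - b * N ^ t| / (N ^ t * D.card) := by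
          rw [div_sub_div _ _ hn.ne' hd.ne', abs_div, abs_of_pos (mul_pos hn hd),
            mul_comm (N ^ t) b]
      _ ≤ (dc * D.card) / (N ^ t * D.card) := by gcongr
      _ = dc / N ^ t := by
          field_simp
  refine hkey.trans ?_
  -- bound dc / N^t
  have hm0 : (0:ℝ) < m := by exact_mod_cast hm
  have hmk : (0:ℝ) < (m:ℝ) - k := by
    have : k < m := by omega
    have := (Nat.cast_lt (α := ℝ)).2 this
    linarith
  have hdcb : dc ≤ (t:ℝ)^2 * k^2 * N^t / m := by
    exact badcount m k t hk hm _ (fun S => Iff.rfl)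
  have h1 : dc / N ^ t ≤ (t:ℝ)^2 * k^2 / m := by
    rw [div_le_div_iff₀ hn hm0]
    have h2 := mul_le_mul_of_nonneg_right hdcb hm0.le
    rw [div_mul_cancel₀ _ hm0.ne'] at h2
    linarith
  refine h1.trans ?_
  rw [div_le_div_iff₀ hm0 hmk]
  have hkk : (0:ℝ) ≤ (t:ℝ)^2 * k^2 := by positivity
  nlinarith [hkk, mul_le_mul_of_nonneg_left (sub_le_self (m:ℝ)
    (by positivity : (0:ℝ) ≤ (k:ℝ))) hkk]
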